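/- For every integer k ≥ 2 and every positive integer d, the limit as N → ∞ of |{ t ∈ T(N,k) : gcd(t_1, …, t_k) = d }| / binomial(N,k) equals d^{-k} · ζ(k)^{-1}, where ζ(k) = ∑_{n=1}^∞ n^{-k}. -/

import Mathlib

open Filter Finset

/-- The space of `k`-event signals: `k` inter-event intervals, each at least 1,
summing to at most `N`. -/
def SignalSpace (N k : ℕ) : Finset (Fin k → ℕ) :=
  (Fintype.piFinset fun _ => Finset.Icc 1 N).filter fun t => ∑ i, t i ≤ N

lemma mem_signalSpace {N k : ℕ} {t : Fin k → ℕ} :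
    t ∈ SignalSpace N k ↔ (∀ i, 1 ≤ t i) ∧ ∑ i, t i ≤ N := by
  simp only [SignalSpace, Finset.mem_filter, Fintype.mem_piFinset, Finset.mem_Icc]
  constructor
  · rintro ⟨h1, h2⟩; exact ⟨fun i => (h1 i).1, h2⟩
  · rintro ⟨h1, h2⟩
    refine ⟨fun i => ⟨h1 i, le_trans ?_ h2⟩, h2⟩
    exact Finset.single_le_sum (f := t) (fun j _ => Nat.zero_le _) (Finset.mem_univ i)

lemma card_signalSpace (N k : ℕ) : (SignalSpace N k).card = N.choose k := by
  induction N generalizing k with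
  | zero =>
    cases k with
    | zero =>
      rw [Nat.choose_self]
      refine Finset.card_eq_one.mpr ⟨fun i => i.elim0, ?_⟩
      ext t
      simp [mem_signalSpace, Subsingleton.elim t fun i => i.elim0]
    | succ j =>
      rw [Nat.choose_eq_zero_of_lt (Nat.succ_pos j)]
      refine Finset.card_eq_zero.mpr ?_
      ext t
      simp only [mem_signalSpace, Finset.notMem_empty, iff_false, not_and]
      intro h1 h2
      have h3 := Finset.single_le_sum (f := t) (fun j _ => Nat.zero_le _) (Finset.mem_univ 0)
      have h4 := h1 0
      omega
  | succ N ih =>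
    cases k with
    | zero =>
      rw [Nat.choose_zero_right]
      refine Finset.card_eq_one.mpr ⟨fun i => i.elim0, ?_⟩
      ext t
      simp [mem_signalSpace, Subsingleton.elim t fun i => i.elim0]
    | succ j =>
      have h1 : (SignalSpace (N+1) (j+1)).filter (fun t => ∑ i, t i ≤ N)
          = SignalSpace N (j+1) := by
        ext t
        simp only [Finset.mem_filter, mem_signalSpace]
        constructor
        · rintro ⟨⟨a, _⟩, c⟩; exact ⟨a, c⟩
        · rintro ⟨a, b⟩; exact ⟨⟨a, by omega⟩, b⟩
      have h2 : (((SignalSpace (N+1) (j+1)).filter (fun t => ¬ ∑ i, t i ≤ N)).card)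
          = (SignalSpace N j).card := by
        refine Finset.card_bij' (fun t _ => Fin.init t)
          (fun s _ => Fin.snoc s (N + 1 - ∑ i, s i)) ?_ ?_ ?_ ?_
        · intro t ht
          beta_reduce
          simp only [Finset.mem_filter, mem_signalSpace] at ht
          obtain ⟨⟨ha, hb⟩, hc⟩ := ht
          have hsum : ∑ i : Fin j, t i.castSucc + t (Fin.last j) = ∑ i, t i :=
            (Fin.sum_univ_castSucc t).symm
          have hl := ha (Fin.last j)
          rw [mem_signalSpace]
          refine ⟨fun i => ha i.castSucc, ?_⟩
          have hinit : ∑ i, Fin.init t i = ∑ i : Fin j, t i.castSucc := rfl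
          omega
        · intro s hs
          beta_reduce
          rw [mem_signalSpace] at hs
          obtain ⟨ha, hb⟩ := hs
          simp only [Finset.mem_filter, mem_signalSpace]
          have hsum : ∑ i, Fin.snoc s (N + 1 - ∑ i, s i) i
              = ∑ i, s i + (N + 1 - ∑ i, s i) := by
            rw [Fin.sum_univ_castSucc]
            simp
          refine ⟨⟨?_, ?_⟩, ?_⟩
          · intro i
            induction i using Fin.lastCases with
            | last => simp; omega
            | cast i' => simpa using ha i'
          · omega
          · omega
        · intro t ht
          beta_reduce
          simp only [Finset.mem_filter, mem_signalSpace] at ht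
          obtain ⟨⟨ha, hb⟩, hc⟩ := ht
          have hsum : ∑ i : Fin j, t i.castSucc + t (Fin.last j) = ∑ i, t i :=
            (Fin.sum_univ_castSucc t).symm
          have hinit : ∑ i, Fin.init t i = ∑ i : Fin j, t i.castSucc := rfl
          have heq : N + 1 - ∑ i, Fin.init t i = t (Fin.last j) := by
            rw [hinit]; omega
          show Fin.snoc (Fin.init t) (N + 1 - ∑ i, Fin.init t i) = t
          rw [heq]
          exact Fin.snoc_init_self t
        · intro s hs
          funext i
          simp [Fin.init, Fin.snoc_castSucc]
      have hsplit := Finset.card_filter_add_card_filter_not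
        (s := SignalSpace (N+1) (j+1)) (p := fun t => ∑ i, t i ≤ N)
      rw [Nat.choose_succ_succ N j, ← hsplit, h1, h2, ih, ih, Nat.add_comm]

lemma card_gcd_fiber (N k d : ℕ) (hd : 0 < d) :
    ((SignalSpace N k).filter fun t => Finset.univ.gcd t = d).card
      = ((SignalSpace (N / d) k).filter fun t => Finset.univ.gcd t = 1).card := by
  have hnorm : (normalize d : ℕ) = d := normalize_eq d
  refine Finset.card_bij' (fun t _ i => t i / d) (fun s _ i => d * s i) ?_ ?_ ?_ ?_
  · intro t ht
    simp only [Finset.mem_filter, mem_signalSpace] at ht ⊢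
    obtain ⟨⟨h1, h2⟩, h3⟩ := ht
    have hdvd : ∀ i, d ∣ t i := fun i => h3 ▸ Finset.gcd_dvd (Finset.mem_univ i)
    have hone : ∀ i, 1 ≤ t i / d := fun i =>
      (Nat.one_le_div_iff hd).mpr (Nat.le_of_dvd (h1 i) (hdvd i))
    have hsum : (∑ i, t i / d) * d = ∑ i, t i := by
      rw [Finset.sum_mul]
      exact Finset.sum_congr rfl fun i _ => Nat.div_mul_cancel (hdvd i)
    refine ⟨⟨hone, (Nat.le_div_iff_mul_le hd).mpr (hsum ▸ h2)⟩, ?_⟩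
    have hkey : Finset.univ.gcd (fun i => d * (t i / d)) = d * Finset.univ.gcd (fun i => t i / d) := by
      rw [Finset.gcd_mul_left, hnorm]
    have hdt : (fun i => d * (t i / d)) = t := funext fun i => Nat.mul_div_cancel' (hdvd i) 
    rw [hdt, h3] at hkey
    have : d * 1 = d * Finset.univ.gcd fun i => t i / d := by omega
    exact (Nat.eq_of_mul_eq_mul_left hd this).symm
  · intro s hs
    simp only [Finset.mem_filter, mem_signalSpace] at hs ⊢
    obtain ⟨⟨h1, h2⟩, h3⟩ := hs
    refine ⟨⟨fun i => Nat.one_le_iff_ne_zero.mpr (Nat.mul_ne_zero (by omega) (by have := h1 i; omega)), ?_⟩, ?_⟩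
    · rw [← Finset.mul_sum, mul_comm]
      exact (Nat.le_div_iff_mul_le hd).mp h2
    · rw [Finset.gcd_mul_left, hnorm, h3, mul_one]
  · intro t ht
    simp only [Finset.mem_filter, mem_signalSpace] at ht
    obtain ⟨⟨h1, h2⟩, h3⟩ := ht
    have hdvd : ∀ i, d ∣ t i := fun i => h3 ▸ Finset.gcd_dvd (Finset.mem_univ i)
    exact funext fun i => Nat.mul_div_cancel' (hdvd i)
  · intro s hs
    exact funext fun i => Nat.mul_div_cancel_left _ hd

lemma sum_fibers (N k : ℕ) (hk : 0 < k) :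
    ∑ d ∈ Finset.Icc 1 N, ((SignalSpace N k).filter fun t => Finset.univ.gcd t = d).card
      = N.choose k := by
  rw [← card_signalSpace]
  refine (Finset.card_eq_sum_card_fiberwise fun t ht => ?_).symm
  rw [Finset.mem_coe, mem_signalSpace] at ht
  obtain ⟨h1, h2⟩ := ht
  set i0 : Fin k := ⟨0, hk⟩
  have hdvd : Finset.univ.gcd t ∣ t i0 := Finset.gcd_dvd (Finset.mem_univ i0)
  have hle : t i0 ≤ N :=
    le_trans (Finset.single_le_sum (f := t) (fun j _ => Nat.zero_le _) (Finset.mem_univ i0)) h2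
  have h1' := h1 i0
  rw [Finset.mem_coe, Finset.mem_Icc]
  constructor
  · rcases Nat.eq_zero_or_pos (Finset.univ.gcd t) with h | h
    · rw [h] at hdvd; have := Nat.eq_zero_of_zero_dvd hdvd; omega
    · exact h
  · exact le_trans (Nat.le_of_dvd (by omega) hdvd) hle

open ArithmeticFunction ArithmeticFunction.Moebius in
lemma coprime_card_eq (N k : ℕ) (hk : 0 < k) (hN : 1 ≤ N) :
    (((SignalSpace N k).filter fun t => Finset.univ.gcd t = 1).card : ℤ)
      = ∑ e ∈ Finset.Icc 1 N, μ e * ((N / e).choose k : ℤ) := by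
  have hg : ∀ m f : ℕ, 1 ≤ f →
      ((SignalSpace m k).filter fun t => Finset.univ.gcd t = f).card
        = ((SignalSpace (m / f) k).filter fun t => Finset.univ.gcd t = 1).card :=
    fun m f hf => card_gcd_fiber m k f hf
  have hchoose : ∀ m : ℕ, (m.choose k : ℤ)
      = ∑ f ∈ Finset.Icc 1 m,
        (((SignalSpace (m / f) k).filter fun t => Finset.univ.gcd t = 1).card : ℤ) := by
    intro m
    rw [← sum_fibers m k hk]
    push_cast
    refine Finset.sum_congr rfl fun f hf => ?_
    rw [hg m f (Finset.mem_Icc.mp hf).1]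
  refine Eq.symm ?_
  calc ∑ e ∈ Finset.Icc 1 N, (μ e : ℤ) * ((N / e).choose k : ℤ)
      = ∑ e ∈ Finset.Icc 1 N, ∑ f ∈ Finset.Icc 1 (N / e), (μ e : ℤ) *
          (((SignalSpace (N / (e * f)) k).filter fun t => Finset.univ.gcd t = 1).card : ℤ) := by
        refine Finset.sum_congr rfl fun e he => ?_
        rw [hchoose (N / e), Finset.mul_sum]
        refine Finset.sum_congr rfl fun f hf => ?_
        rw [Nat.div_div_eq_div_mul]
    _ = ∑ p ∈ (Finset.Icc 1 N).sigma fun e => Finset.Icc 1 (N / e), (μ p.1 : ℤ) *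
          (((SignalSpace (N / (p.1 * p.2)) k).filter fun t => Finset.univ.gcd t = 1).card : ℤ) := by
        rw [Finset.sum_sigma]
    _ = ∑ q ∈ (Finset.Icc 1 N).sigma fun n => n.divisors, (μ q.2 : ℤ) *
          (((SignalSpace (N / q.1) k).filter fun t => Finset.univ.gcd t = 1).card : ℤ) := by
        refine Finset.sum_nbij' (fun p => ⟨p.1 * p.2, p.1⟩) (fun q => ⟨q.2, q.1 / q.2⟩)
          ?_ ?_ ?_ ?_ ?_
        · rintro ⟨e, f⟩ hp
          simp only [Finset.mem_sigma, Finset.mem_Icc] at hp ⊢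
          obtain ⟨⟨he1, he2⟩, hf1, hf2⟩ := hp
          have hef : e * f ≤ N := by
            rw [mul_comm]
            exact (Nat.le_div_iff_mul_le (by omega : 0 < e)).mp hf2
          have hne : e * f ≠ 0 := Nat.mul_ne_zero (by omega) (by omega)
          refine ⟨⟨by omega, hef⟩, Nat.mem_divisors.mpr ⟨Dvd.intro f rfl, hne⟩⟩
        · rintro ⟨n, e⟩ hq
          simp only [Finset.mem_sigma, Finset.mem_Icc, Nat.mem_divisors] at hq ⊢
          obtain ⟨⟨hn1, hn2⟩, hdvd, hne⟩ := hq
          have he1 : 1 ≤ e := Nat.pos_of_dvd_of_pos hdvd (by omega)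
          have hen : e ≤ n := Nat.le_of_dvd (by omega) hdvd
          refine ⟨⟨he1, le_trans hen hn2⟩, ?_, Nat.div_le_div_right hn2⟩
          exact (Nat.one_le_div_iff (by omega)).mpr hen
        · rintro ⟨e, f⟩ hp
          simp only [Finset.mem_sigma, Finset.mem_Icc] at hp
          obtain ⟨⟨he1, _⟩, _, _⟩ := hp
          simp [Nat.mul_div_cancel_left _ (by omega : 0 < e)]
        · rintro ⟨n, e⟩ hq
          simp only [Finset.mem_sigma, Finset.mem_Icc, Nat.mem_divisors] at hq
          obtain ⟨⟨hn1, _⟩, hdvd, _⟩ := hq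
          simp [Nat.mul_div_cancel' hdvd]
        · rintro ⟨e, f⟩ hp
          simp only [Finset.mem_sigma, Finset.mem_Icc] at hp
          obtain ⟨⟨he1, _⟩, _, _⟩ := hp
          simp [Nat.mul_div_cancel_left _ (by omega : 0 < e)]
    _ = ∑ n ∈ Finset.Icc 1 N, (∑ e ∈ n.divisors, (μ e : ℤ)) *
          (((SignalSpace (N / n) k).filter fun t => Finset.univ.gcd t = 1).card : ℤ) := by
        rw [Finset.sum_sigma]
        exact Finset.sum_congr rfl fun n _ => by rw [Finset.sum_mul]
    _ = (((SignalSpace N k).filter fun t => Finset.univ.gcd t = 1).card : ℤ) := by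
        have hdiv : ∀ n : ℕ, ∑ e ∈ n.divisors, (μ e : ℤ) = if n = 1 then 1 else 0 := by
          intro n
          have h := congrArg (fun f : ArithmeticFunction ℤ => f n) moebius_mul_coe_zeta
          simp only [coe_mul_zeta_apply, one_apply] at h
          exact h
        rw [Finset.sum_congr rfl fun n _ => by rw [hdiv n, ite_mul, one_mul, zero_mul]]
        rw [Finset.sum_ite_eq' (Finset.Icc 1 N) 1]
        simp [hN]

lemma tendsto_floor_div_cast (m : ℕ) (hm : 0 < m) :
    Filter.Tendsto (fun N : ℕ => ((N / m : ℕ) : ℝ) / (N : ℝ)) atTop (nhds (1 / m)) := by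
  have hlow : Filter.Tendsto (fun N : ℕ => 1 / (m : ℝ) - 1 / (N : ℝ)) atTop (nhds (1 / m)) := by
    have := (tendsto_one_div_atTop_nhds_zero_nat : Tendsto (fun n : ℕ => 1 / (n : ℝ)) atTop (nhds 0))
    simpa using (tendsto_const_nhds (x := 1 / (m : ℝ))).sub this
  refine tendsto_of_tendsto_of_tendsto_of_le_of_le' hlow tendsto_const_nhds ?_ ?_
  · filter_upwards [eventually_ge_atTop 1] with N hN
    have h1 : (N : ℝ) ≠ 0 := by positivity
    have h2 : (m : ℝ) ≠ 0 := by positivity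
    have hmod := Nat.div_add_mod N m
    have hlt : N % m < m := Nat.mod_lt _ hm
    have hreal : (m : ℝ) * ((N / m : ℕ) : ℝ) + m > N := by
      have : m * (N / m) + m > N := by omega
      exact_mod_cast this
    rw [div_sub_div _ _ h2 h1, div_le_div_iff₀ (by positivity) (by positivity)]
    nlinarith [show (1:ℝ) ≤ (N:ℝ) from by exact_mod_cast hN]
  · filter_upwards with N
    have hle : (m : ℝ) * ((N / m : ℕ) : ℝ) ≤ N := by
      have : m * (N / m) ≤ N := Nat.mul_div_le N m
      exact_mod_cast this
    rcases Nat.eq_zero_or_pos N with rfl | hN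
    · simp
    have h1 : (0:ℝ) < (N : ℝ) := by exact_mod_cast hN
    rw [div_le_div_iff₀ h1 (by positivity : (0:ℝ) < (m:ℝ))]
    nlinarith

lemma tendsto_factor (m i : ℕ) (hm : 0 < m) :
    Filter.Tendsto (fun N : ℕ => ((N / m - i : ℕ) : ℝ) / ((N - i : ℕ) : ℝ)) atTop
      (nhds (1 / m)) := by
  have h0 : Filter.Tendsto (fun N : ℕ => (i : ℝ) / (N : ℝ)) atTop (nhds 0) := by
    simpa using tendsto_one_div_atTop_nhds_zero_nat.const_mul (i : ℝ) |>.congr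
      (fun N => by ring)
  have hnum : Filter.Tendsto (fun N : ℕ => ((N / m : ℕ) : ℝ) / (N : ℝ) - (i : ℝ) / (N : ℝ))
      atTop (nhds (1 / m)) := by
    simpa using (tendsto_floor_div_cast m hm).sub h0
  have hden : Filter.Tendsto (fun N : ℕ => 1 - (i : ℝ) / (N : ℝ)) atTop (nhds 1) := by
    simpa using (tendsto_const_nhds (x := (1:ℝ))).sub h0
  have := hnum.div hden one_ne_zero
  rw [div_one] at this
  refine this.congr' ?_
  filter_upwards [eventually_ge_atTop (m * (i + 1))] with N hN
  have him : i + 1 ≤ N / m := by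
    rw [Nat.le_div_iff_mul_le hm, mul_comm]
    exact hN
  have hiN : i + 1 ≤ N := le_trans him (Nat.div_le_self N m)
  have c1 : ((N / m - i : ℕ) : ℝ) = ((N / m : ℕ) : ℝ) - i := by
    rw [Nat.cast_sub (by omega)]
  have c2 : ((N - i : ℕ) : ℝ) = (N : ℝ) - i := by
    rw [Nat.cast_sub (by omega)]
  have hN1 : 1 ≤ N := by
    have h := Nat.mul_pos hm (Nat.succ_pos i)
    omega
  have hN0 : (N : ℝ) ≠ 0 := Nat.cast_ne_zero.mpr (by omega)
  have hNi : (N : ℝ) - i ≠ 0 := by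
    have : (i : ℝ) + 1 ≤ N := by exact_mod_cast hiN
    nlinarith
  rw [c1, c2]
  simp only [Pi.div_apply]
  field_simp

lemma choose_ratio_eq (k m : ℕ) (N : ℕ) :
    ((N / m).choose k : ℝ) / (N.choose k : ℝ)
      = ∏ i ∈ Finset.range k, (((N / m - i : ℕ) : ℝ) / ((N - i : ℕ) : ℝ)) := by
  have hfac : ((k.factorial : ℝ)) ≠ 0 := by positivity
  have key : ∀ n : ℕ, (n.choose k : ℝ) = (n.descFactorial k : ℝ) / (k.factorial : ℝ) := by
    intro n
    rw [Nat.descFactorial_eq_factorial_mul_choose]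
    push_cast
    field_simp
  rw [key, key, div_div_div_comm, div_self hfac, div_one,
    Nat.descFactorial_eq_prod_range, Nat.descFactorial_eq_prod_range]
  push_cast
  rw [Finset.prod_div_distrib]

lemma tendsto_choose_ratio (k m : ℕ) (hm : 0 < m) :
    Filter.Tendsto (fun N : ℕ => ((N / m).choose k : ℝ) / (N.choose k : ℝ)) atTop
      (nhds (((m : ℝ) ^ k)⁻¹)) := by
  have h : Filter.Tendsto
      (fun N : ℕ => ∏ i ∈ Finset.range k, (((N / m - i : ℕ) : ℝ) / ((N - i : ℕ) : ℝ)))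
      atTop (nhds (∏ _i ∈ Finset.range k, (1 / (m : ℝ)))) :=
    tendsto_finset_prod _ fun i _ => tendsto_factor m i hm
  rw [Finset.prod_const, Finset.card_range, one_div, inv_pow] at h
  exact h.congr fun N => (choose_ratio_eq k m N).symm

lemma choose_ratio_bound (k m N : ℕ) (hk : 0 < k) (hm : 0 < m) :
    ((N / m).choose k : ℝ) / (N.choose k : ℝ) ≤ (k : ℝ) ^ k / (m : ℝ) ^ k := by
  rcases lt_or_ge N k with h | h
  · rw [Nat.choose_eq_zero_of_lt h]
    rw [Nat.cast_zero, div_zero]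
    positivity
  · -- N ≥ k
    set a := N / m with ha
    have hNat : m ^ k * a.descFactorial k ≤ k ^ k * N.descFactorial k := by
      have h1 : m ^ k * a.descFactorial k ≤ m ^ k * a ^ k :=
        Nat.mul_le_mul_left _ (Nat.descFactorial_le_pow a k)
      have h2 : m ^ k * a ^ k = (m * a) ^ k := (mul_pow m a k).symm
      have h3 : (m * a) ^ k ≤ N ^ k := Nat.pow_le_pow_left (by
        have h := Nat.mul_div_le N m
        rw [← ha] at h
        omega) k
      set c := N + 1 - k with hc
      have hc1 : 1 ≤ c := by omega
      have h4 : N ≤ k * c := by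
        have e1 : (k - 1) * c = k * c - c := Nat.sub_one_mul k c
        have e2 : k - 1 ≤ (k - 1) * c := Nat.le_mul_of_pos_right _ (by omega)
        have e3 : c ≤ k * c := Nat.le_mul_of_pos_left _ hk
        omega
      have h5 : N ^ k ≤ (k * c) ^ k := Nat.pow_le_pow_left h4 k
      have h6 : (k * c) ^ k = k ^ k * c ^ k := mul_pow k c k
      have h7 : c ^ k ≤ N.descFactorial k := by
        rw [Nat.descFactorial_eq_prod_range]
        calc c ^ k = ∏ _i ∈ Finset.range k, c := by
              rw [Finset.prod_const, Finset.card_range]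
          _ ≤ ∏ i ∈ Finset.range k, (N - i) := by
              refine Finset.prod_le_prod' fun i hi => ?_
              rw [Finset.mem_range] at hi
              omega
      have h8 : k ^ k * c ^ k ≤ k ^ k * N.descFactorial k := Nat.mul_le_mul_left _ h7
      omega
    have hNatChoose : m ^ k * a.choose k ≤ k ^ k * N.choose k := by
      have hfac : 0 < k.factorial := Nat.factorial_pos k
      refine Nat.le_of_mul_le_mul_left ?_ hfac
      calc k.factorial * (m ^ k * a.choose k) = m ^ k * (k.factorial * a.choose k) := by ring
        _ = m ^ k * a.descFactorial k := by rw [← Nat.descFactorial_eq_factorial_mul_choose]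
        _ ≤ k ^ k * N.descFactorial k := hNat
        _ = k ^ k * (k.factorial * N.choose k) := by
            rw [← Nat.descFactorial_eq_factorial_mul_choose]
        _ = k.factorial * (k ^ k * N.choose k) := by ring
    have hpos : (0 : ℝ) < (N.choose k : ℝ) := by
      exact_mod_cast Nat.choose_pos h
    rw [div_le_div_iff₀ hpos (by positivity)]
    calc ((a.choose k : ℝ)) * (m : ℝ) ^ k = ((m ^ k * a.choose k : ℕ) : ℝ) := by push_cast; ring
      _ ≤ ((k ^ k * N.choose k : ℕ) : ℝ) := by exact_mod_cast hNatChoose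
      _ = (k : ℝ) ^ k * (N.choose k : ℝ) := by push_cast; ring

/-- `ζ(k) = ∑_{n=1}^∞ n^{-k}`. -/
noncomputable def zetaSum (k : ℕ) : ℝ := ∑' n : ℕ, (1 : ℝ) / ((n : ℝ) + 1) ^ k

lemma zetaSummandSummable (k : ℕ) (hk : 2 ≤ k) :
    Summable (fun n : ℕ => (1 : ℝ) / ((n : ℝ) + 1) ^ k) := by
  have h := (Real.summable_one_div_nat_pow (p := k)).mpr hk
  have h2 := (summable_nat_add_iff 1).mpr h
  refine h2.congr fun n => ?_
  push_cast
  ring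

lemma moebiusSummandSummable (k : ℕ) (hk : 2 ≤ k) :
    Summable (fun n : ℕ => ((ArithmeticFunction.moebius (n + 1) : ℤ) : ℝ) / ((n : ℝ) + 1) ^ k) := by
  refine Summable.of_norm_bounded (zetaSummandSummable k hk) fun n => ?_
  rw [norm_div]
  have h1 : ‖((ArithmeticFunction.moebius (n + 1) : ℤ) : ℝ)‖ ≤ 1 := by
    have := ArithmeticFunction.abs_moebius_le_one (n := n + 1)
    rw [Real.norm_eq_abs]
    exact_mod_cast this
  have h2 : ‖((n : ℝ) + 1) ^ k‖ = ((n : ℝ) + 1) ^ k := by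
    rw [Real.norm_eq_abs, abs_of_pos (by positivity)]
  rw [h2]
  have h3 : (0:ℝ) < ((n : ℝ) + 1) ^ k := by positivity
  exact div_le_div_of_nonneg_right h1 h3.le

open scoped LSeries.notation ArithmeticFunction.zeta ArithmeticFunction.Moebius in
lemma moebius_tsum_eq (k : ℕ) (hk : 2 ≤ k) :
    ∑' n : ℕ, (((ArithmeticFunction.moebius (n + 1) : ℤ) : ℝ) / ((n : ℝ) + 1) ^ k)
      = (zetaSum k)⁻¹ := by
  have hs : 1 < ((k : ℂ)).re := by
    simp only [Complex.natCast_re]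
    exact_mod_cast by omega
  have hZL : LSeries ↗ζ (k : ℂ) = ((zetaSum k : ℝ) : ℂ) := by
    rw [LSeries, Summable.tsum_eq_zero_add (ArithmeticFunction.LSeriesSummable_zeta_iff.mpr hs)]
    rw [LSeries.term_zero, zero_add, zetaSum, Complex.ofReal_tsum]
    refine tsum_congr fun n => ?_
    rw [LSeries.term_of_ne_zero (Nat.succ_ne_zero n)]
    rw [Complex.cpow_natCast]
    simp only [ArithmeticFunction.zeta_apply, Nat.succ_ne_zero, if_false]
    push_cast
    ring
  have hML : LSeries ↗μ (k : ℂ)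
      = ((∑' n : ℕ, (((ArithmeticFunction.moebius (n + 1) : ℤ) : ℝ) / ((n : ℝ) + 1) ^ k) : ℝ) : ℂ) := by
    rw [LSeries, Summable.tsum_eq_zero_add (ArithmeticFunction.LSeriesSummable_moebius_iff.mpr hs)]
    rw [LSeries.term_zero, zero_add, Complex.ofReal_tsum]
    refine tsum_congr fun n => ?_
    rw [LSeries.term_of_ne_zero (Nat.succ_ne_zero n)]
    rw [Complex.cpow_natCast]
    push_cast
    ring
  have hmain := ArithmeticFunction.LSeries_zeta_mul_Lseries_moebius hs
  rw [hZL, hML, ← Complex.ofReal_mul, ← Complex.ofReal_one] at hmain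
  have hreal : zetaSum k * (∑' n : ℕ,
      (((ArithmeticFunction.moebius (n + 1) : ℤ) : ℝ) / ((n : ℝ) + 1) ^ k)) = 1 :=
    Complex.ofReal_injective hmain
  exact (inv_eq_of_mul_eq_one_right hreal).symm

theorem gcd_fiber_density (k : ℕ) (hk : 2 ≤ k) (d : ℕ) (hd : 0 < d) :
    Tendsto
      (fun N : ℕ =>
        (((SignalSpace N k).filter fun t => Finset.univ.gcd t = d).card : ℝ) /
          (N.choose k : ℝ))
      atTop (nhds (((d : ℝ) ^ k)⁻¹ * (zetaSum k)⁻¹)) := by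
  have hk0 : 0 < k := by omega
  set μc : ℕ → ℝ := fun n => ((ArithmeticFunction.moebius (n + 1) : ℤ) : ℝ) with hμc
  set F : ℕ → ℕ → ℝ := fun N n =>
    μc n * (((N / (d * (n + 1))).choose k : ℝ) / (N.choose k : ℝ)) with hF
  set L : ℕ → ℝ := fun n => μc n * ((((d * (n + 1) : ℕ)) : ℝ) ^ k)⁻¹ with hL
  have hmpos : ∀ n : ℕ, 0 < d * (n + 1) := fun n => Nat.mul_pos hd (Nat.succ_pos n)
  -- key identity
  have key : ∀ N : ℕ, d ≤ N →
      (((SignalSpace N k).filter fun t => Finset.univ.gcd t = d).card : ℝ) / (N.choose k : ℝ)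
        = ∑' n : ℕ, F N n := by
    intro N hN
    have hNd : 1 ≤ N / d := (Nat.one_le_div_iff hd).mpr hN
    rw [card_gcd_fiber N k d hd]
    have hc := coprime_card_eq (N / d) k hk0 hNd
    have hcast : ((((SignalSpace (N / d) k).filter fun t => Finset.univ.gcd t = 1).card : ℝ))
        = ∑ e ∈ Finset.Icc 1 (N / d),
            ((ArithmeticFunction.moebius e : ℤ) : ℝ) * ((N / (d * e)).choose k : ℝ) := by
      have h2 := congrArg (fun z : ℤ => (z : ℝ)) hc
      push_cast at h2
      rw [h2]
      exact Finset.sum_congr rfl fun e he => by rw [Nat.div_div_eq_div_mul]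
    rw [hcast, Finset.sum_div]
    have hvanish : ∀ n ∉ Finset.range (N / d), F N n = 0 := by
      intro n hn
      rw [Finset.mem_range, not_lt] at hn
      have hz : N / (d * (n + 1)) = 0 := by
        rw [← Nat.div_div_eq_div_mul]
        exact Nat.div_eq_of_lt (by omega)
      simp [hF, hz, Nat.choose_eq_zero_of_lt hk0]
    rw [tsum_eq_sum hvanish, ← Finset.Ico_add_one_right_eq_Icc, Finset.sum_Ico_eq_sum_range]
    simp only [Nat.add_sub_cancel]
    refine Finset.sum_congr rfl fun i _ => ?_
    rw [hF, hμc]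
    simp only [Nat.add_comm 1 i]
    rw [mul_div_assoc]
  -- dominated convergence
  have hbound_summable : Summable (fun n : ℕ => (k : ℝ) ^ k / (((d * (n + 1) : ℕ)) : ℝ) ^ k) := by
    refine ((zetaSummandSummable k hk).mul_left ((k : ℝ) ^ k / (d : ℝ) ^ k)).congr fun n => ?_
    push_cast
    rw [mul_pow]
    rw [div_mul_div_comm, mul_one]
  have hpointwise : ∀ n : ℕ, Filter.Tendsto (fun N => F N n) atTop (nhds (L n)) := by
    intro n
    exact (tendsto_choose_ratio k (d * (n + 1)) (hmpos n)).const_mul (μc n)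
  have hbound : ∀ᶠ N in (atTop : Filter ℕ), ∀ n : ℕ,
      ‖F N n‖ ≤ (k : ℝ) ^ k / (((d * (n + 1) : ℕ)) : ℝ) ^ k := by
    filter_upwards with N n
    rw [hF, norm_mul]
    have h1 : ‖μc n‖ ≤ 1 := by
      have h := ArithmeticFunction.abs_moebius_le_one (n := n + 1)
      have : μc n = ((ArithmeticFunction.moebius (n + 1) : ℤ) : ℝ) := rfl
      rw [this, Real.norm_eq_abs]
      exact_mod_cast h
    have h2 : (0:ℝ) ≤ ((N / (d * (n + 1))).choose k : ℝ) / (N.choose k : ℝ) :=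
      div_nonneg (Nat.cast_nonneg _) (Nat.cast_nonneg _)
    have h3 := choose_ratio_bound k (d * (n + 1)) N hk0 (hmpos n)
    calc ‖μc n‖ * ‖((N / (d * (n + 1))).choose k : ℝ) / (N.choose k : ℝ)‖
        ≤ 1 * (((N / (d * (n + 1))).choose k : ℝ) / (N.choose k : ℝ)) := by
          rw [Real.norm_eq_abs (((N / (d * (n + 1))).choose k : ℝ) / (N.choose k : ℝ)),
            abs_of_nonneg h2]
          exact mul_le_mul_of_nonneg_right h1 h2
      _ = ((N / (d * (n + 1))).choose k : ℝ) / (N.choose k : ℝ) := one_mul _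
      _ ≤ (k : ℝ) ^ k / (((d * (n + 1) : ℕ)) : ℝ) ^ k := h3
  have htend := tendsto_tsum_of_dominated_convergence hbound_summable hpointwise hbound
  -- limit value
  have hval : ∑' n, L n = ((d : ℝ) ^ k)⁻¹ * (zetaSum k)⁻¹ := by
    have hterm : ∀ n : ℕ, L n = ((d : ℝ) ^ k)⁻¹ * (μc n / ((n : ℝ) + 1) ^ k) := by
      intro n
      rw [hL]
      push_cast
      rw [mul_pow, mul_inv]
      ring
    rw [tsum_congr hterm, tsum_mul_left, hμc]
    rw [moebius_tsum_eq k hk]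
  rw [hval] at htend
  refine htend.congr' ?_
  filter_upwards [eventually_ge_atTop d] with N hN
  exact (key N hN).symm
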